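/- arXiv:2211.12633 — 2 statements merged into one kernel-verified Lean document; each statement's English description precedes it below -/
import Mathlib

section
/- Let V be a real Banach space, m, N ∈ ℕ, w = (w_j)_{j=1}^N positive weights and k > 0. Suppose A ∈ ℝ^{m×N} has the weighted robust null space property over ℝ of order (k,w) with constants ρ ≥ 0 and γ ≥ 0, and set s* := max{ |S| : S ⊆ {1,…,N}, |S|_w ≤ k }. Then the induced operator A : V^N → V^m satisfies, for every v ∈ V^N and every S ⊆ {1,…,N} with |S|_w ≤ k, ‖v_S‖_{2;V} ≤ (√(s*)·ρ/√k)·‖v_{S^c}‖_{1,w;V} + √(s*)·γ·‖A v‖_{2;V}; that is, A has the weighted robust null space property over V of order (k,w) with constants ρ′ = √(s*)·ρ and γ′ = √(s*)·γ. -/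
open Finset

/-- The ℓ²-norm `‖x‖_{2;V}` of a tuple `x ∈ V^N`. -/
noncomputable def norm2V {V : Type*} [NormedAddCommGroup V] {N : ℕ} (x : Fin N → V) : ℝ :=
  Real.sqrt (∑ j, ‖x j‖ ^ 2)

/-- The weighted ℓ¹-norm `‖x‖_{1,w;V}` of a tuple `x ∈ V^N`. -/
noncomputable def norm1wV {V : Type*} [NormedAddCommGroup V] {N : ℕ} (w : Fin N → ℝ)
    (x : Fin N → V) : ℝ :=
  ∑ j, w j * ‖x j‖

/-- The action of a matrix `A ∈ ℝ^{m×N}` on `V^N`, giving an element of `V^m`. -/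
noncomputable def matVec {V : Type*} [NormedAddCommGroup V] [NormedSpace ℝ V] {m N : ℕ}
    (A : Matrix (Fin m) (Fin N) ℝ) (x : Fin N → V) : Fin m → V :=
  fun i => ∑ j, A i j • x j

/-- `x_S`: the vector agreeing with `x` on `S` and vanishing outside `S`. -/
noncomputable def restrictTo {V : Type*} [NormedAddCommGroup V] {N : ℕ} (x : Fin N → V)
    (S : Finset (Fin N)) : Fin N → V :=
  fun j => if j ∈ S then x j else 0

/-- The weighted cardinality `|S|_w = Σ_{j∈S} w_j²`. -/
def wCard {N : ℕ} (w : Fin N → ℝ) (S : Finset (Fin N)) : ℝ :=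
  ∑ j ∈ S, w j ^ 2

/-- `A` has the weighted robust null space property over the subset `W ⊆ V`
of order `(k, w)` with constants `ρ` and `γ`. -/
def WRNSP {V : Type*} [NormedAddCommGroup V] [NormedSpace ℝ V] {m N : ℕ}
    (A : Matrix (Fin m) (Fin N) ℝ) (W : Set V) (k : ℝ) (w : Fin N → ℝ) (ρ γ : ℝ) : Prop :=
  ∀ x : Fin N → V, (∀ j, x j ∈ W) → ∀ S : Finset (Fin N), wCard w S ≤ k →
    norm2V (restrictTo x S) ≤
      ρ / Real.sqrt k * norm1wV w (restrictTo x Sᶜ) + γ * norm2V (matVec A x)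

/-- The weighted best `(k,w)`-term approximation error `σ_k(x)_{1,w;V}`. -/
noncomputable def sigmaK {V : Type*} [NormedAddCommGroup V] {N : ℕ} (w : Fin N → ℝ) (k : ℝ)
    (x : Fin N → V) : ℝ :=
  sInf {t : ℝ | ∃ S : Finset (Fin N), wCard w S ≤ k ∧ t = norm1wV w (restrictTo x Sᶜ)}

lemma norm2V_nonneg' {V : Type*} [NormedAddCommGroup V] {N : ℕ} (x : Fin N → V) :
    0 ≤ norm2V x := Real.sqrt_nonneg _

lemma norm2V_mono' {V W : Type*} [NormedAddCommGroup V] [NormedAddCommGroup W] {N : ℕ}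
    {x : Fin N → V} {y : Fin N → W} (h : ∀ j, ‖x j‖ ≤ ‖y j‖) : norm2V x ≤ norm2V y := by
  apply Real.sqrt_le_sqrt
  exact Finset.sum_le_sum fun j _ => pow_le_pow_left₀ (norm_nonneg _) (h j) 2

/-- Lemma 6.2: the weighted rNSP over `ℝ` implies the weighted rNSP over a Banach space `V`,
with constants `ρ' = √(s*)·ρ` and `γ' = √(s*)·γ`, where
`s* = max{ |S| : S ⊆ [N], |S|_w ≤ k }`. -/
theorem wrNSP_real_to_banach
    {V : Type*} [NormedAddCommGroup V] [NormedSpace ℝ V] [CompleteSpace V]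
    {m N : ℕ} (A : Matrix (Fin m) (Fin N) ℝ)
    (w : Fin N → ℝ) (hw : ∀ j, 0 < w j)
    (k : ℝ) (hk : 0 < k)
    (ρ γ : ℝ) (hρ : 0 ≤ ρ) (hγ : 0 ≤ γ)
    (hA : WRNSP A (Set.univ : Set ℝ) k w ρ γ)
    (sStar : ℕ)
    (hsStar : IsGreatest {s : ℕ | ∃ S : Finset (Fin N), wCard w S ≤ k ∧ S.card = s} sStar) :
    WRNSP A (Set.univ : Set V) k w (Real.sqrt sStar * ρ) (Real.sqrt sStar * γ) := by
  intro v _ S hS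
  have hsq : (0:ℝ) ≤ Real.sqrt sStar := Real.sqrt_nonneg _
  have hρk : (0:ℝ) ≤ ρ / Real.sqrt k := div_nonneg hρ (Real.sqrt_nonneg _)
  have hn1 : (0:ℝ) ≤ norm1wV w (restrictTo v Sᶜ) :=
    Finset.sum_nonneg fun j _ => mul_nonneg (hw j).le (norm_nonneg _)
  by_cases hz : ∀ j ∈ S, v j = 0
  · have h0 : norm2V (restrictTo v S) = 0 := by
      have : ∀ j ∈ Finset.univ, ‖restrictTo v S j‖ ^ 2 = 0 := by
        intro j _
        simp only [restrictTo]
        split_ifs with h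
        · rw [hz j h]; simp
        · simp
      unfold norm2V
      rw [Finset.sum_congr rfl this]
      simp
    rw [h0]
    exact add_nonneg (mul_nonneg (div_nonneg (mul_nonneg hsq hρ) (Real.sqrt_nonneg _)) hn1)
      (mul_nonneg (mul_nonneg hsq hγ) (norm2V_nonneg' _))
  · push_neg at hz
    obtain ⟨j1, hj1S, hj1⟩ := hz
    obtain ⟨j0, hj0S, hj0max⟩ := Finset.exists_max_image S (fun j => ‖v j‖) ⟨j1, hj1S⟩
    have h0 : v j0 ≠ 0 := by
      intro h
      have := hj0max j1 hj1S
      rw [h, norm_zero] at this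
      exact hj1 (norm_le_zero_iff.mp this)
    obtain ⟨g, hg1, hgx⟩ := exists_dual_vector ℝ (v j0) (norm_ne_zero_iff.mpr h0)
    set x : Fin N → ℝ := fun i => g (v i) with hxdef
    have hgx' : x j0 = ‖v j0‖ := by simpa using hgx
    have hx : ∀ i, ‖x i‖ ≤ ‖v i‖ := by
      intro i
      calc ‖x i‖ = ‖g (v i)‖ := rfl
        _ ≤ ‖g‖ * ‖v i‖ := g.le_opNorm _
        _ = ‖v i‖ := by rw [hg1, one_mul]
    have hns := hA x (fun j => trivial) S hS
    have hcard : (S.card : ℝ) ≤ (sStar : ℝ) := by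
      exact_mod_cast hsStar.2 ⟨S, hS, rfl⟩
    have ha : norm2V (restrictTo v S) ≤ Real.sqrt S.card * ‖v j0‖ := by
      have h1 : ∑ j, ‖restrictTo v S j‖ ^ 2 ≤ (S.card : ℝ) * ‖v j0‖ ^ 2 := by
        have e1 : ∑ j, ‖restrictTo v S j‖ ^ 2 = ∑ j ∈ S, ‖v j‖ ^ 2 := by
          rw [show (∑ j, ‖restrictTo v S j‖ ^ 2) = ∑ j, (if j ∈ S then ‖v j‖ ^ 2 else 0) from
            Finset.sum_congr rfl (by intro j _; simp only [restrictTo]; split_ifs <;> simp)]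
          rw [Finset.sum_ite_mem, Finset.univ_inter]
        rw [e1]
        calc ∑ j ∈ S, ‖v j‖ ^ 2 ≤ ∑ _j ∈ S, ‖v j0‖ ^ 2 :=
              Finset.sum_le_sum fun j hj => pow_le_pow_left₀ (norm_nonneg _) (hj0max j hj) 2
          _ = (S.card : ℝ) * ‖v j0‖ ^ 2 := by rw [Finset.sum_const, nsmul_eq_mul]
      calc norm2V (restrictTo v S) ≤ Real.sqrt ((S.card : ℝ) * ‖v j0‖ ^ 2) :=
            Real.sqrt_le_sqrt h1
        _ = Real.sqrt S.card * ‖v j0‖ := by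
            rw [Real.sqrt_mul (Nat.cast_nonneg _), Real.sqrt_sq (norm_nonneg _)]
    have hc : ‖v j0‖ ≤ norm2V (restrictTo x S) := by
      have h2 : ‖x j0‖ ^ 2 ≤ ∑ j, ‖restrictTo x S j‖ ^ 2 := by
        have := Finset.single_le_sum (f := fun j => ‖restrictTo x S j‖ ^ 2)
          (fun j _ => sq_nonneg _) (Finset.mem_univ j0)
        simpa [restrictTo, hj0S] using this
      calc ‖v j0‖ = x j0 := hgx'.symm
        _ ≤ ‖x j0‖ := le_abs_self _
        _ = Real.sqrt (‖x j0‖ ^ 2) := (Real.sqrt_sq (norm_nonneg _)).symm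
        _ ≤ norm2V (restrictTo x S) := Real.sqrt_le_sqrt h2
    have hd : norm1wV w (restrictTo x Sᶜ) ≤ norm1wV w (restrictTo v Sᶜ) := by
      apply Finset.sum_le_sum
      intro j _
      simp only [restrictTo]
      split_ifs with h
      · exact mul_le_mul_of_nonneg_left (hx j) (hw j).le
      · simp
    have he : norm2V (matVec A x) ≤ norm2V (matVec A v) := by
      apply norm2V_mono'
      intro i
      have : matVec A x i = g (matVec A v i) := by
        simp [matVec, map_sum, map_smul, smul_eq_mul, hxdef]
      rw [this]
      calc ‖g (matVec A v i)‖ ≤ ‖g‖ * ‖matVec A v i‖ := g.le_opNorm _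
        _ = ‖matVec A v i‖ := by rw [hg1, one_mul]
    calc norm2V (restrictTo v S) ≤ Real.sqrt S.card * ‖v j0‖ := ha
      _ ≤ Real.sqrt sStar * norm2V (restrictTo x S) :=
          mul_le_mul (Real.sqrt_le_sqrt hcard) hc (norm_nonneg _) hsq
      _ ≤ Real.sqrt sStar *
          (ρ / Real.sqrt k * norm1wV w (restrictTo x Sᶜ) + γ * norm2V (matVec A x)) :=
          mul_le_mul_of_nonneg_left hns hsq
      _ ≤ Real.sqrt sStar *
          (ρ / Real.sqrt k * norm1wV w (restrictTo v Sᶜ) + γ * norm2V (matVec A v)) := by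
          gcongr
      _ = Real.sqrt sStar * ρ / Real.sqrt k * norm1wV w (restrictTo v Sᶜ) +
          Real.sqrt sStar * γ * norm2V (matVec A v) := by ring
end

section
/- Let w = (w_j)_{j=1}^N be weights with w_j ≥ 1 for all j, and let k > 0. Suppose A ∈ ℝ^{m×N} has the weighted robust null space property over ℝ of order (k,w) with constants 0 ≤ ρ < 1 and γ > 0, and let A′ ∈ ℝ^{m×N} satisfy ‖A − A′‖₂ ≤ δ̃ (operator norm ℓ² → ℓ²) where γ·δ̃ < 1. Then A′ has the weighted robust null space property over ℝ of order (k,w) with constants ρ′ = (ρ + γ·δ̃·√k)/(1 − γ·δ̃) and γ′ = γ/(1 − γ·δ̃); that is, for every x ∈ ℝ^N and every S ⊆ {1,…,N} with |S|_w ≤ k, ‖x_S‖₂ ≤ (ρ′/√k)·‖x_{S^c}‖_{1,w} + γ′·‖A′x‖₂. -/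
open Finset

lemma norm2V_nonneg'_s7 {n : ℕ} (x : Fin n → ℝ) : 0 ≤ norm2V x := Real.sqrt_nonneg _

lemma norm2V_add_le' {n : ℕ} (x y : Fin n → ℝ) :
    norm2V (x + y) ≤ norm2V x + norm2V y := by
  have hx : ∀ z : Fin n → ℝ, norm2V z = ‖(WithLp.equiv 2 (Fin n → ℝ)).symm z‖ := by
    intro z; rw [EuclideanSpace.norm_eq]; rfl
  rw [hx, hx, hx]
  have : (WithLp.equiv 2 (Fin n → ℝ)).symm (x + y)
      = (WithLp.equiv 2 (Fin n → ℝ)).symm x + (WithLp.equiv 2 (Fin n → ℝ)).symm y := rfl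
  rw [this]
  exact norm_add_le _ _

lemma norm2V_le_sum_norm {n : ℕ} (x : Fin n → ℝ) :
    norm2V x ≤ ∑ j, ‖x j‖ := by
  unfold norm2V
  have h1 : (∑ j, ‖x j‖ ^ 2) ≤ (∑ j, ‖x j‖) ^ 2 := by
    rw [sq (∑ j, ‖x j‖), Finset.sum_mul]
    refine Finset.sum_le_sum fun j _ => ?_
    rw [sq]
    exact mul_le_mul_of_nonneg_left
      (Finset.single_le_sum (fun i _ => norm_nonneg (x i)) (Finset.mem_univ j))
      (norm_nonneg _)
  calc Real.sqrt (∑ j, ‖x j‖ ^ 2) ≤ Real.sqrt ((∑ j, ‖x j‖) ^ 2) := Real.sqrt_le_sqrt h1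
    _ = ∑ j, ‖x j‖ := Real.sqrt_sq (Finset.sum_nonneg fun j _ => norm_nonneg _)

/-- Perturbation of the weighted rNSP over `ℝ`: if `A` has the weighted rNSP of order `(k,w)`
with constants `0 ≤ ρ < 1`, `γ > 0`, and `‖A − A′‖₂ ≤ δ̃` (as an operator `ℓ² → ℓ²`) with
`γ·δ̃ < 1`, then `A′` has the weighted rNSP of order `(k,w)` with constants
`ρ′ = (ρ + γ·δ̃·√k)/(1 − γ·δ̃)` and `γ′ = γ/(1 − γ·δ̃)`. -/
theorem wrNSP_perturbation
    {m N : ℕ} (A A' : Matrix (Fin m) (Fin N) ℝ)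
    (w : Fin N → ℝ) (hw : ∀ j, 1 ≤ w j)
    (k : ℝ) (hk : 0 < k)
    (ρ γ : ℝ) (hρ0 : 0 ≤ ρ) (hρ1 : ρ < 1) (hγ : 0 < γ)
    (hA : WRNSP A (Set.univ : Set ℝ) k w ρ γ)
    (dt : ℝ) (hpert : ∀ x : Fin N → ℝ, norm2V (matVec (A - A') x) ≤ dt * norm2V x)
    (hdt : γ * dt < 1) :
    WRNSP A' (Set.univ : Set ℝ) k w ((ρ + γ * dt * Real.sqrt k) / (1 - γ * dt))
      (γ / (1 - γ * dt)) := by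
  intro x _ S hS
  set sk := Real.sqrt k with hsk
  have hsk0 : 0 < sk := Real.sqrt_pos.mpr hk
  have hden : 0 < 1 - γ * dt := by linarith
  -- names
  set a := norm2V (restrictTo x S) with ha
  set b := norm1wV w (restrictTo x Sᶜ) with hb
  set c := norm2V (matVec A' x) with hc
  have ha0 : 0 ≤ a := norm2V_nonneg'_s7 _
  have hc0 : 0 ≤ c := norm2V_nonneg'_s7 _
  have hb0 : 0 ≤ b := by
    refine Finset.sum_nonneg fun j _ => mul_nonneg (le_trans zero_le_one (hw j)) (norm_nonneg _)
  -- ℓ² ≤ weighted ℓ¹ on the complement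
  have hbc : norm2V (restrictTo x Sᶜ) ≤ b := by
    calc norm2V (restrictTo x Sᶜ) ≤ ∑ j, ‖restrictTo x Sᶜ j‖ := norm2V_le_sum_norm _
      _ ≤ b := Finset.sum_le_sum fun j _ => by
          nth_rewrite 1 [show ‖restrictTo x Sᶜ j‖ = 1 * ‖restrictTo x Sᶜ j‖ from (one_mul _).symm]
          exact mul_le_mul_of_nonneg_right (hw j) (norm_nonneg _)
  -- decomposition of x
  have hdecomp : x = restrictTo x S + restrictTo x Sᶜ := by
    funext j
    by_cases hj : j ∈ S <;> simp [restrictTo, hj]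
  have hxle : norm2V x ≤ a + b := by
    calc norm2V x ≤ norm2V (restrictTo x S) + norm2V (restrictTo x Sᶜ) := by
          nth_rewrite 1 [hdecomp]; exact norm2V_add_le' _ _
      _ ≤ a + b := by exact add_le_add le_rfl hbc
  -- dt ≥ 0 or trivial
  by_cases hdt0 : 0 ≤ dt
  · -- norm2V (matVec A x) ≤ c + dt * norm2V x
    have hAx : norm2V (matVec A x) ≤ c + dt * norm2V x := by
      have hsplit : matVec A x = matVec A' x + matVec (A - A') x := by
        funext i
        simp only [matVec, Matrix.sub_apply, sub_smul, Pi.add_apply]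
        rw [← Finset.sum_add_distrib]
        congr 1; funext j; ring
      calc norm2V (matVec A x)
          ≤ norm2V (matVec A' x) + norm2V (matVec (A - A') x) := by
            rw [hsplit]; exact norm2V_add_le' _ _
        _ ≤ c + dt * norm2V x := add_le_add le_rfl (hpert x)
    have hmain := hA x (fun j => Set.mem_univ _) S hS
    have key : a ≤ ρ / sk * b + γ * (c + dt * (a + b)) := by
      have h1 : γ * norm2V (matVec A x) ≤ γ * (c + dt * (a + b)) := by
        apply mul_le_mul_of_nonneg_left _ (le_of_lt hγ)
        calc norm2V (matVec A x) ≤ c + dt * norm2V x := hAx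
          _ ≤ c + dt * (a + b) := by
              exact add_le_add le_rfl (mul_le_mul_of_nonneg_left hxle hdt0)
      calc a ≤ ρ / sk * b + γ * norm2V (matVec A x) := hmain
        _ ≤ ρ / sk * b + γ * (c + dt * (a + b)) := add_le_add le_rfl h1
    have key2 : (1 - γ * dt) * a ≤ (ρ / sk + γ * dt) * b + γ * c := by nlinarith [key]
    have hgoal : a ≤ (ρ + γ * dt * sk) / (1 - γ * dt) / sk * b + γ / (1 - γ * dt) * c := by
      have heq : (ρ + γ * dt * sk) / (1 - γ * dt) / sk = (ρ / sk + γ * dt) / (1 - γ * dt) := by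
        rw [div_right_comm]
        congr 1
        field_simp
      rw [heq]
      rw [div_mul_eq_mul_div, div_mul_eq_mul_div, ← add_div, le_div_iff₀ hden]
      calc a * (1 - γ * dt) = (1 - γ * dt) * a := by ring
        _ ≤ (ρ / sk + γ * dt) * b + γ * c := key2
    exact hgoal
  · -- dt < 0 : then norm2V x = 0, so x = 0 and everything vanishes
    push_neg at hdt0
    have h0 : norm2V x = 0 := by
      have h1 := hpert x
      have h2 : 0 ≤ norm2V (matVec (A - A') x) := norm2V_nonneg'_s7 _
      have h3 : 0 ≤ dt * norm2V x := le_trans h2 h1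
      nlinarith [norm2V_nonneg'_s7 x]
    have hx0 : ∀ j, x j = 0 := by
      intro j
      have h1 : (∑ j, ‖x j‖ ^ 2) = 0 := by
        have h := Real.sqrt_eq_zero'.mp h0
        exact le_antisymm h (Finset.sum_nonneg fun i _ => sq_nonneg _)
      have h2 : ‖x j‖ ^ 2 = 0 := by
        have := Finset.sum_eq_zero_iff_of_nonneg (fun i _ => sq_nonneg ‖x i‖) |>.mp h1 j
          (Finset.mem_univ j)
        exact this
      simpa using pow_eq_zero_iff (n := 2) (by norm_num) |>.mp h2
    have hA0 : a = 0 := by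
      have : restrictTo x S = fun _ => 0 := by
        funext j; by_cases hj : j ∈ S <;> simp [restrictTo, hj, hx0]
      rw [ha, this]; simp [norm2V]
    have hB0 : b = 0 := by
      rw [hb]; unfold norm1wV
      refine Finset.sum_eq_zero fun j _ => ?_
      by_cases hj : j ∈ Sᶜ <;> simp [restrictTo, hj, hx0]
    have hC0 : c = 0 := by
      rw [hc]; unfold norm2V
      have : matVec A' x = fun _ => 0 := by
        funext i; unfold matVec
        refine Finset.sum_eq_zero fun j _ => by simp [hx0]
      rw [this]; simp
    rw [hA0, hB0, hC0]; simp
end
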